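/- Define F : ℝⁿ → ℝ^{n+1} by F(x) = (sort(x), Q(x)). Then for all x, y ∈ ℝⁿ: d_+(x,y) ≤ ‖F(x) − F(y)‖₁ ≤ 2·d_+(x,y), where d_+(x,y) = min_{σ∈A_n} ‖x − σy‖₁. -/

import Mathlib

open Finset Equiv Equiv.Perm

namespace Stmt12Aux

lemma four_point {a b c d : ℝ} (hab : a ≤ b) (hcd : c ≤ d) :
    |a - c| + |b - d| ≤ |a - d| + |b - c| := by
  rcases abs_cases (a-c) with ⟨h1,h1'⟩|⟨h1,h1'⟩ <;> rcases abs_cases (b-d) with ⟨h2,h2'⟩|⟨h2,h2'⟩ <;>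
  rcases abs_cases (a-d) with ⟨h3,h3'⟩|⟨h3,h3'⟩ <;> rcases abs_cases (b-c) with ⟨h4,h4'⟩|⟨h4,h4'⟩ <;>
  linarith

lemma sum_two_diff {n : ℕ} (f g : Fin n → ℝ) (a b : Fin n) (hab : a ≠ b) (C : ℝ)
    (hfg : ∀ i, i ≠ a → i ≠ b → f i = g i) (h2 : f a + f b ≤ g a + g b + C) :
    ∑ i, f i ≤ (∑ i, g i) + C := by
  classical
  rw [← Finset.sum_erase_add _ _ (Finset.mem_univ b),
      ← Finset.sum_erase_add _ _ (Finset.mem_univ b),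
      ← Finset.sum_erase_add _ _ (Finset.mem_erase.mpr ⟨hab, Finset.mem_univ a⟩),
      ← Finset.sum_erase_add _ _ (Finset.mem_erase.mpr ⟨hab, Finset.mem_univ a⟩)]
  have heq : ∑ i ∈ ((Finset.univ.erase b).erase a), f i
      = ∑ i ∈ ((Finset.univ.erase b).erase a), g i := by
    refine Finset.sum_congr rfl fun i hi => ?_
    simp only [Finset.mem_erase] at hi
    exact hfg i hi.1 hi.2.1
  linarith

lemma pair_le_sum {n : ℕ} (f : Fin n → ℝ) (hf : ∀ i, 0 ≤ f i) {i j : Fin n} (hij : i ≠ j) :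
    f i + f j ≤ ∑ k, f k := by
  classical
  rw [← Finset.sum_pair hij]
  exact Finset.sum_le_sum_of_subset_of_nonneg (Finset.subset_univ _) (fun k _ _ => hf k)

lemma rearrange : ∀ (n : ℕ) (u v : Fin n → ℝ), Monotone u → Monotone v →
    ∀ σ : Equiv.Perm (Fin n), ∑ i, |u i - v i| ≤ ∑ i, |u i - v (σ i)| := by
  intro n
  induction n with
  | zero => intro u v _ _ σ; simp
  | succ n ih =>
    intro u v hu hv σ
    set i₀ := σ⁻¹ 0 with hi₀
    have hσi₀ : σ i₀ = 0 := Equiv.apply_symm_apply σ 0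
    have key : ∑ i, |u i - v ((σ * Equiv.swap i₀ 0) i)| ≤ ∑ i, |u i - v (σ i)| := by
      rcases eq_or_ne i₀ 0 with h | h
      · simp [h]
      · have := sum_two_diff (fun i => |u i - v ((σ * Equiv.swap i₀ 0) i)|)
          (fun i => |u i - v (σ i)|) 0 i₀ (Ne.symm h) 0
          (fun i hi0 hii₀ => by
            simp only [Equiv.Perm.mul_apply]
            rw [Equiv.swap_apply_of_ne_of_ne hii₀ hi0])
          (by
            simp only [Equiv.Perm.mul_apply, Equiv.swap_apply_right, Equiv.swap_apply_left, hσi₀]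
            have h4 := four_point (a := u 0) (b := u i₀) (c := v 0) (d := v (σ 0))
              (hu (Fin.zero_le i₀)) (hv (Fin.zero_le (σ 0)))
            linarith)
        simpa using this
    refine le_trans ?_ key
    set s : Equiv.Perm (Fin (n+1)) := σ * Equiv.swap i₀ 0 with hs
    have hs0 : s 0 = 0 := by
      simp [hs, Equiv.Perm.mul_apply, Equiv.swap_apply_right, hσi₀]
    have hsym : Equiv.Perm.decomposeFin.symm (Equiv.Perm.decomposeFin s) = s :=
      Equiv.symm_apply_apply _ _
    set p := (Equiv.Perm.decomposeFin s).1 with hpdef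
    set τ := (Equiv.Perm.decomposeFin s).2 with hτdef
    have h0 : s 0 = p := by
      conv_lhs => rw [← hsym]
      exact Equiv.Perm.decomposeFin_symm_apply_zero p τ
    have hp0 : p = 0 := by rw [← h0, hs0]
    have hsucc : ∀ i : Fin n, s i.succ = (τ i).succ := by
      intro i
      conv_lhs => rw [← hsym]
      have h1 : Equiv.Perm.decomposeFin.symm (p, τ) i.succ = Equiv.swap 0 p ((τ i).succ) :=
        Equiv.Perm.decomposeFin_symm_apply_succ τ p i
      rw [show Equiv.Perm.decomposeFin s = (p, τ) from rfl, h1, hp0, Equiv.swap_self]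
      rfl
    rw [Fin.sum_univ_succ (f := fun i => |u i - v i|),
        Fin.sum_univ_succ (f := fun i => |u i - v (s i)|)]
    rw [hs0]
    refine add_le_add_right ?_ _
    have hih := ih (u ∘ Fin.succ) (v ∘ Fin.succ)
      (hu.comp Fin.strictMono_succ.monotone) (hv.comp Fin.strictMono_succ.monotone) τ
    calc ∑ i : Fin n, |u i.succ - v i.succ| ≤ ∑ i : Fin n, |u i.succ - v (τ i).succ| := hih
    _ = ∑ i : Fin n, |u i.succ - v (s i.succ)| := by
        refine Finset.sum_congr rfl fun i _ => by rw [hsucc i]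

/-- pairs i < j as a sigma finset -/
def PP (n : ℕ) : Finset (Σ _ : Fin n, Fin n) := Finset.univ.sigma fun i => Finset.Ioi i

lemma mem_PP {n : ℕ} {p : Σ _ : Fin n, Fin n} : p ∈ PP n ↔ p.1 < p.2 := by
  cases p; simp [PP, Finset.mem_sigma, Finset.mem_Ioi]

noncomputable def Efun {n : ℕ} (x : Fin n → ℝ) : ℝ :=
  ∏ p ∈ PP n, Real.sign (x p.2 - x p.1)

lemma Efun_eq_Ioi {n : ℕ} (x : Fin n → ℝ) :
    (∏ i : Fin n, ∏ j ∈ Finset.Ioi i, Real.sign (x j - x i)) = Efun x := by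
  rw [Efun, PP, Finset.prod_sigma]

/-- sorted image of a pair under a permutation -/
def φ {n : ℕ} (σ : Equiv.Perm (Fin n)) (p : Σ _ : Fin n, Fin n) : Σ _ : Fin n, Fin n :=
  if σ p.1 < σ p.2 then ⟨σ p.1, σ p.2⟩ else ⟨σ p.2, σ p.1⟩

lemma φ_mem {n : ℕ} (σ : Equiv.Perm (Fin n)) {p : Σ _ : Fin n, Fin n} (hp : p ∈ PP n) :
    φ σ p ∈ PP n := by
  rw [mem_PP] at hp ⊢
  unfold φ
  split_ifs with h
  · exact h
  · have hne : σ p.1 ≠ σ p.2 := fun hc => hp.ne (σ.injective hc)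
    exact lt_of_le_of_ne (not_lt.mp h) (Ne.symm hne)

lemma φ_inv {n : ℕ} (σ : Equiv.Perm (Fin n)) {p : Σ _ : Fin n, Fin n} (hp : p ∈ PP n) :
    φ σ⁻¹ (φ σ p) = p := by
  rw [mem_PP] at hp
  rcases lt_or_ge (σ p.1) (σ p.2) with h | h
  · simp [φ, h, hp, Equiv.Perm.coe_inv, Equiv.symm_apply_apply, not_lt.mpr hp.le]
  · have h2 : σ p.2 < σ p.1 :=
      lt_of_le_of_ne h (fun hc => hp.ne (σ.injective hc.symm))
    simp [φ, not_lt.mpr h, not_lt.mpr hp.le, h2, hp, Equiv.Perm.coe_inv, Equiv.symm_apply_apply]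

lemma prod_PP_reindex {n : ℕ} (σ : Equiv.Perm (Fin n)) (g : Fin n → Fin n → ℝ)
    (hg : ∀ a b, a ≠ b → g b a = - g a b) :
    ∏ p ∈ PP n, g (σ p.1) (σ p.2) =
      (∏ p ∈ PP n, if σ p.1 < σ p.2 then (1:ℝ) else -1) * ∏ p ∈ PP n, g p.1 p.2 := by
  have step1 : ∏ p ∈ PP n, g (σ p.1) (σ p.2) =
      ∏ p ∈ PP n, ((if σ p.1 < σ p.2 then (1:ℝ) else -1) * g (φ σ p).1 (φ σ p).2) := by
    refine Finset.prod_congr rfl fun p hp => ?_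
    rw [mem_PP] at hp
    unfold φ
    split_ifs with h
    · rw [one_mul]
    · have hne : σ p.1 ≠ σ p.2 := fun hc => hp.ne (σ.injective hc)
      rw [hg (σ p.2) (σ p.1) (Ne.symm hne)]
      ring
  rw [step1, Finset.prod_mul_distrib]
  congr 1
  refine Finset.prod_nbij' (φ σ) (φ σ⁻¹) (fun p hp => φ_mem σ hp) (fun p hp => φ_mem σ⁻¹ hp)
    (fun p hp => φ_inv σ hp) (fun p hp => ?_) (fun p _ => rfl)
  have := φ_inv σ⁻¹ (p := p) hp
  rwa [inv_inv] at this

noncomputable def Jfun {n : ℕ} (σ : Equiv.Perm (Fin n)) : ℝ :=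
  ∏ p ∈ PP n, if σ p.1 < σ p.2 then (1:ℝ) else -1

lemma Jfun_mul {n : ℕ} (σ τ : Equiv.Perm (Fin n)) : Jfun (σ * τ) = Jfun σ * Jfun τ := by
  unfold Jfun
  have := prod_PP_reindex τ (fun a b => if σ a < σ b then (1:ℝ) else -1) (fun a b hab => by
    have hne : σ a ≠ σ b := fun hc => hab (σ.injective hc)
    show (if σ b < σ a then (1:ℝ) else -1) = -(if σ a < σ b then (1:ℝ) else -1)
    rcases lt_or_gt_of_ne hne with h | h
    · simp [not_lt.mpr h.le, h]
    · simp [not_lt.mpr h.le, h])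
  simp only [Equiv.Perm.mul_apply]
  exact this.trans (mul_comm _ _)

lemma Efun_comp {n : ℕ} (x : Fin n → ℝ) (σ : Equiv.Perm (Fin n)) :
    Efun (x ∘ σ) = Jfun σ * Efun x := by
  unfold Efun Jfun
  exact prod_PP_reindex σ (fun a b => Real.sign (x b - x a)) (fun a b _ => by
    show Real.sign (x a - x b) = -Real.sign (x b - x a)
    rw [← Real.sign_neg]; ring_nf)

lemma Jfun_one {n : ℕ} : Jfun (1 : Equiv.Perm (Fin n)) = 1 := by
  unfold Jfun
  rw [Finset.prod_eq_one]
  intro p hp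
  rw [mem_PP] at hp
  simp [hp]

lemma swap_adj_lt {n : ℕ} {k k' : Fin n} (hk : (k:ℕ)+1 = (k':ℕ)) {p : Σ _ : Fin n, Fin n}
    (hp : p ∈ PP n) (hne : p ≠ ⟨k, k'⟩) :
    Equiv.swap k k' p.1 < Equiv.swap k k' p.2 := by
  rw [mem_PP] at hp
  obtain ⟨a, b⟩ := p
  simp only at hp ⊢
  have hab : (a:ℕ) < (b:ℕ) := hp
  by_cases hak : a = k
  · subst hak
    by_cases hbk' : b = k'
    · subst hbk'; exact absurd rfl hne
    · have hbk : b ≠ a := ne_of_gt hp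
      rw [Equiv.swap_apply_left, Equiv.swap_apply_of_ne_of_ne hbk hbk']
      have h1 := Fin.val_ne_of_ne hbk'
      exact Fin.lt_def.mpr (by omega)
  · by_cases hak' : a = k'
    · subst hak'
      have hbk : b ≠ k := Fin.ne_of_val_ne (by omega)
      have hbk' : b ≠ a := ne_of_gt hp
      rw [Equiv.swap_apply_right, Equiv.swap_apply_of_ne_of_ne hbk hbk']
      exact Fin.lt_def.mpr (by omega)
    · rw [Equiv.swap_apply_of_ne_of_ne hak hak']
      have h1 := Fin.val_ne_of_ne hak
      have h2 := Fin.val_ne_of_ne hak'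
      by_cases hbk : b = k
      · subst hbk
        rw [Equiv.swap_apply_left]
        exact Fin.lt_def.mpr (by omega)
      · by_cases hbk' : b = k'
        · subst hbk'
          rw [Equiv.swap_apply_right]
          exact Fin.lt_def.mpr (by omega)
        · rw [Equiv.swap_apply_of_ne_of_ne hbk hbk']
          exact hp

lemma Jfun_adj {n : ℕ} {k k' : Fin n} (hk : (k:ℕ)+1 = (k':ℕ)) :
    Jfun (Equiv.swap k k') = -1 := by
  unfold Jfun
  rw [Finset.prod_eq_single (⟨k, k'⟩ : Σ _ : Fin n, Fin n)]
  · rw [Equiv.swap_apply_left, Equiv.swap_apply_right, if_neg]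
    show ¬ (k' < k)
    exact not_lt.mpr (le_of_lt (Fin.lt_def.mpr (by omega)))
  · intro p hp hpne
    rw [if_pos (swap_adj_lt hk hp hpne)]
  · intro h
    refine absurd (mem_PP.mpr ?_) h
    show k < k'
    exact Fin.lt_def.mpr (by omega)

lemma Jfun_swap_lt {n : ℕ} : ∀ d : ℕ, ∀ a b : Fin n, a < b → (b:ℕ) - (a:ℕ) ≤ d →
    Jfun (Equiv.swap a b) = -1 := by
  intro d
  induction d with
  | zero => intro a b hab hd; have := Fin.lt_def.mp hab; omega
  | succ d ih =>
    intro a b hab hd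
    have hab' : (a:ℕ) < (b:ℕ) := hab
    by_cases hadj : (a:ℕ) + 1 = (b:ℕ)
    · exact Jfun_adj hadj
    · have hc : (a:ℕ) + 1 < n := by have := b.isLt; omega
      have hbc : b ≠ ⟨(a:ℕ)+1, hc⟩ := by
        intro h; exact hadj (by rw [h])
      have hba : b ≠ a := ne_of_gt hab
      have hid := Equiv.swap_mul_swap_mul_swap hbc hba
      have hca : Jfun (Equiv.swap (⟨(a:ℕ)+1, hc⟩ : Fin n) a) = -1 := by
        rw [Equiv.swap_comm]; exact Jfun_adj rfl
      have hcb : Jfun (Equiv.swap b (⟨(a:ℕ)+1, hc⟩ : Fin n)) = -1 := by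
        rw [Equiv.swap_comm]
        refine ih _ b (Fin.lt_def.mpr ?_) ?_
        · show (a:ℕ)+1 < (b:ℕ); omega
        · show (b:ℕ) - ((a:ℕ)+1) ≤ d; omega
      rw [← hid, Jfun_mul, Jfun_mul, hca, hcb]
      norm_num

lemma Jfun_swap {n : ℕ} {a b : Fin n} (hab : a ≠ b) : Jfun (Equiv.swap a b) = -1 := by
  rcases lt_or_gt_of_ne hab with h | h
  · exact Jfun_swap_lt ((b:ℕ) - (a:ℕ)) a b h le_rfl
  · rw [Equiv.swap_comm]
    exact Jfun_swap_lt ((a:ℕ) - (b:ℕ)) b a h le_rfl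

lemma Jfun_eq_sign {n : ℕ} (σ : Equiv.Perm (Fin n)) :
    Jfun σ = ((Equiv.Perm.sign σ : ℤ) : ℝ) := by
  refine Equiv.Perm.swap_induction_on σ ?_ ?_
  · simp [Jfun_one]
  · intro f x y hxy hf
    rw [Jfun_mul, Jfun_swap hxy, hf, Equiv.Perm.sign_mul, Equiv.Perm.sign_swap hxy]
    push_cast
    ring

lemma Efun_comp_sign {n : ℕ} (x : Fin n → ℝ) (σ : Equiv.Perm (Fin n)) :
    Efun (x ∘ σ) = ((Equiv.Perm.sign σ : ℤ) : ℝ) * Efun x := by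
  rw [Efun_comp, Jfun_eq_sign]

noncomputable def Mfun {n : ℕ} (x : Fin n → ℝ) : ℝ :=
  sInf {d : ℝ | ∃ i j : Fin n, i < j ∧ d = |x j - x i|}

lemma setM_eq {n : ℕ} (x : Fin n → ℝ) :
    {d : ℝ | ∃ i j : Fin n, i < j ∧ d = |x j - x i|} =
      (fun p : Fin n × Fin n => |x p.2 - x p.1|) '' {p | p.1 < p.2} := by
  ext d
  constructor
  · rintro ⟨i, j, h, rfl⟩; exact ⟨(i, j), h, rfl⟩
  · rintro ⟨⟨i, j⟩, h, rfl⟩; exact ⟨i, j, h, rfl⟩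

lemma setM_finite {n : ℕ} (x : Fin n → ℝ) :
    Set.Finite {d : ℝ | ∃ i j : Fin n, i < j ∧ d = |x j - x i|} := by
  rw [setM_eq]; exact (Set.toFinite _).image _

lemma setM_nonempty {n : ℕ} (hn : 2 ≤ n) (x : Fin n → ℝ) :
    Set.Nonempty {d : ℝ | ∃ i j : Fin n, i < j ∧ d = |x j - x i|} := by
  refine ⟨_, ⟨⟨0, by omega⟩, ⟨1, by omega⟩, Fin.lt_def.mpr (by norm_num), rfl⟩⟩

lemma Mfun_le {n : ℕ} (x : Fin n → ℝ) {i j : Fin n} (h : i < j) : Mfun x ≤ |x j - x i| :=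
  csInf_le (setM_finite x).bddBelow ⟨i, j, h, rfl⟩

lemma Mfun_mem {n : ℕ} (hn : 2 ≤ n) (x : Fin n → ℝ) :
    ∃ i j : Fin n, i < j ∧ Mfun x = |x j - x i| := by
  have := (setM_nonempty hn x).csInf_mem (setM_finite x)
  obtain ⟨i, j, h, hd⟩ := this
  exact ⟨i, j, h, hd⟩

lemma Mfun_nonneg {n : ℕ} (hn : 2 ≤ n) (x : Fin n → ℝ) : 0 ≤ Mfun x := by
  obtain ⟨i, j, _, h⟩ := Mfun_mem hn x
  rw [h]; exact abs_nonneg _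

lemma setM_comp_subset {n : ℕ} (x : Fin n → ℝ) (σ : Equiv.Perm (Fin n)) :
    {d : ℝ | ∃ i j : Fin n, i < j ∧ d = |(x ∘ σ) j - (x ∘ σ) i|} ⊆
      {d : ℝ | ∃ i j : Fin n, i < j ∧ d = |x j - x i|} := by
  rintro d ⟨i, j, hij, rfl⟩
  have hne : σ i ≠ σ j := σ.injective.ne hij.ne
  rcases lt_or_gt_of_ne hne with h | h
  · exact ⟨σ i, σ j, h, rfl⟩
  · exact ⟨σ j, σ i, h, by simp [Function.comp, abs_sub_comm]⟩

lemma Mfun_comp {n : ℕ} (hn : 2 ≤ n) (x : Fin n → ℝ) (σ : Equiv.Perm (Fin n)) :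
    Mfun (x ∘ σ) = Mfun x := by
  refine le_antisymm ?_ ?_
  · have hsub : {d : ℝ | ∃ i j : Fin n, i < j ∧ d = |x j - x i|} ⊆
        {d : ℝ | ∃ i j : Fin n, i < j ∧ d = |(x ∘ σ) j - (x ∘ σ) i|} := by
      have h1 := setM_comp_subset (x ∘ σ) σ⁻¹
      have h2 : (x ∘ σ) ∘ (σ⁻¹ : Equiv.Perm (Fin n)) = x := by
        funext i; simp [Function.comp, Equiv.Perm.coe_inv, Equiv.apply_symm_apply]
      rwa [h2] at h1
    exact csInf_le_csInf (setM_finite _).bddBelow (setM_nonempty hn x) hsub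
  · exact csInf_le_csInf (setM_finite _).bddBelow (setM_nonempty hn _)
      (setM_comp_subset x σ)

lemma Efun_vals {n : ℕ} (x : Fin n → ℝ) : Efun x = 0 ∨ Efun x = 1 ∨ Efun x = -1 := by
  by_cases h0 : ∃ p ∈ PP n, Real.sign (x p.2 - x p.1) = 0
  · obtain ⟨p, hp, h⟩ := h0
    exact Or.inl (Finset.prod_eq_zero hp h)
  · push_neg at h0
    right
    refine Finset.prod_induction _ (fun r => r = 1 ∨ r = -1)
      (fun a b ha hb => by rcases ha with rfl|rfl <;> rcases hb with rfl|rfl <;> norm_num)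
      (Or.inl rfl) (fun p hp => ?_)
    rcases lt_trichotomy (x p.2 - x p.1) 0 with h | h | h
    · exact Or.inr (Real.sign_of_neg h)
    · exact absurd (by rw [h, Real.sign_zero]) (h0 p hp)
    · exact Or.inl (Real.sign_of_pos h)

lemma abs_Efun_le_one {n : ℕ} (x : Fin n → ℝ) : |Efun x| ≤ 1 := by
  rcases Efun_vals x with h | h | h <;> rw [h] <;> norm_num

lemma Efun_zero_tie {n : ℕ} {x : Fin n → ℝ} (h : Efun x = 0) :
    ∃ i j : Fin n, i < j ∧ x j = x i := by
  unfold Efun at h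
  rw [Finset.prod_eq_zero_iff] at h
  obtain ⟨p, hp, h0⟩ := h
  exact ⟨p.1, p.2, mem_PP.mp hp, by
    have := Real.sign_eq_zero_iff.mp h0; linarith⟩

lemma Efun_ne_zero_factors {n : ℕ} {x : Fin n → ℝ} (h : Efun x ≠ 0) :
    ∀ p ∈ PP n, Real.sign (x p.2 - x p.1) ≠ 0 := by
  intro p hp h0
  exact h (Finset.prod_eq_zero hp h0)

lemma cross_bound {n : ℕ} (x y : Fin n → ℝ) {i j : Fin n} (hij : i < j) :
    |(y j - y i) - (x j - x i)| ≤ ∑ k, |x k - y k| := by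
  have h1 : |(y j - y i) - (x j - x i)| ≤ |y j - x j| + |y i - x i| := by
    calc |(y j - y i) - (x j - x i)| = |(y j - x j) - (y i - x i)| := by ring_nf
    _ ≤ |y j - x j| + |y i - x i| := abs_sub _ _
  have h2 : |y j - x j| = |x j - y j| := abs_sub_comm _ _
  have h3 : |y i - x i| = |x i - y i| := abs_sub_comm _ _
  have h4 := pair_le_sum (fun k => |x k - y k|) (fun k => abs_nonneg _) hij.ne
  calc |(y j - y i) - (x j - x i)| ≤ |y j - x j| + |y i - x i| := h1
  _ = |x i - y i| + |x j - y j| := by rw [h2, h3]; ring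
  _ ≤ ∑ k, |x k - y k| := h4

lemma Mfun_lip {n : ℕ} (hn : 2 ≤ n) (x y : Fin n → ℝ) :
    Mfun x ≤ Mfun y + ∑ i, |x i - y i| := by
  obtain ⟨i, j, hij, hMy⟩ := Mfun_mem hn y
  have step : |x j - x i| ≤ |y j - y i| + |(x j - x i) - (y j - y i)| := by
    calc |x j - x i| = |(y j - y i) + ((x j - x i) - (y j - y i))| := by ring_nf
    _ ≤ |y j - y i| + |(x j - x i) - (y j - y i)| := abs_add_le _ _
  have hc : |(x j - x i) - (y j - y i)| ≤ ∑ k, |x k - y k| := by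
    rw [abs_sub_comm]
    exact cross_bound x y hij
  calc Mfun x ≤ |x j - x i| := Mfun_le x hij
  _ ≤ |y j - y i| + |(x j - x i) - (y j - y i)| := step
  _ ≤ Mfun y + ∑ k, |x k - y k| := by rw [hMy]; exact add_le_add le_rfl hc

lemma sum_abs_comm {n : ℕ} (x y : Fin n → ℝ) : ∑ i, |x i - y i| = ∑ i, |y i - x i| :=
  Finset.sum_congr rfl fun i _ => abs_sub_comm _ _

end Stmt12Aux

/-- The nondecreasing rearrangement (sorting) of a vector. -/
noncomputable def sortVec {n : ℕ} (x : Fin n → ℝ) : Fin n → ℝ := x ∘ Tuple.sort x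

/-- Q(x) = (∏_{i<j} sign(x_j - x_i)) · min_{i<j} |x_j - x_i|. -/
noncomputable def Qfun {n : ℕ} (x : Fin n → ℝ) : ℝ :=
  (∏ i : Fin n, ∏ j ∈ Finset.Ioi i, Real.sign (x j - x i)) *
  sInf {d : ℝ | ∃ i j : Fin n, i < j ∧ d = |x j - x i|}

/-- Minimal adjacent gap min_{j} (x_{j+1} - x_j). -/
noncomputable def minGap {n : ℕ} (x : Fin n → ℝ) : ℝ :=
  sInf {d : ℝ | ∃ i j : Fin n, (i : ℕ) + 1 = (j : ℕ) ∧ d = x j - x i}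

/-- d_±(x,y) = min_{σ ∈ S_n} ‖x - σy‖₁ where (σy)_i = y_{σ(i)}. -/
noncomputable def dpm {n : ℕ} (x y : Fin n → ℝ) : ℝ :=
  Finset.univ.inf' Finset.univ_nonempty fun σ : Equiv.Perm (Fin n) => ∑ i, |x i - y (σ i)|

/-- d_+(x,y) = min_{σ ∈ A_n} ‖x - σy‖₁. -/
noncomputable def dplus {n : ℕ} (x y : Fin n → ℝ) : ℝ :=
  Finset.univ.inf' Finset.univ_nonempty fun σ : alternatingGroup (Fin n) =>
    ∑ i, |x i - y ((σ : Equiv.Perm (Fin n)) i)|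

namespace Stmt12Aux

lemma Qfun_eq {n : ℕ} (x : Fin n → ℝ) : Qfun x = Efun x * Mfun x := by
  unfold Qfun Mfun; rw [Efun_eq_Ioi]

lemma Qfun_lip {n : ℕ} (hn : 2 ≤ n) (x y : Fin n → ℝ) :
    |Qfun x - Qfun y| ≤ ∑ i, |x i - y i| := by
  have hS0 : (0:ℝ) ≤ ∑ i, |x i - y i| := Finset.sum_nonneg fun i _ => abs_nonneg _
  have hMx0 := Mfun_nonneg hn x
  have hMy0 := Mfun_nonneg hn y
  rw [Qfun_eq, Qfun_eq]
  rcases eq_or_ne (Efun x) 0 with hEx | hEx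
  · rw [hEx, zero_mul, zero_sub, abs_neg]
    obtain ⟨i, j, hij, hxij⟩ := Efun_zero_tie hEx
    have hMyS : Mfun y ≤ ∑ i, |x i - y i| := by
      have h1 : |y j - y i| = |(y j - y i) - (x j - x i)| := by
        rw [sub_eq_zero.mpr hxij]; ring_nf
      calc Mfun y ≤ |y j - y i| := Mfun_le y hij
      _ = |(y j - y i) - (x j - x i)| := h1
      _ ≤ ∑ k, |x k - y k| := cross_bound x y hij
    calc |Efun y * Mfun y| = |Efun y| * |Mfun y| := abs_mul _ _
    _ ≤ 1 * Mfun y := by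
        rw [abs_of_nonneg hMy0]
        exact mul_le_mul_of_nonneg_right (abs_Efun_le_one y) hMy0
    _ = Mfun y := one_mul _
    _ ≤ _ := hMyS
  · rcases eq_or_ne (Efun y) 0 with hEy | hEy
    · rw [hEy, zero_mul, sub_zero]
      obtain ⟨i, j, hij, hyij⟩ := Efun_zero_tie hEy
      have hMxS : Mfun x ≤ ∑ i, |x i - y i| := by
        have h1 : |x j - x i| = |(x j - x i) - (y j - y i)| := by
          rw [sub_eq_zero.mpr hyij]; ring_nf
        calc Mfun x ≤ |x j - x i| := Mfun_le x hij
        _ = |(x j - x i) - (y j - y i)| := h1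
        _ = |(y j - y i) - (x j - x i)| := abs_sub_comm _ _
        _ ≤ ∑ k, |x k - y k| := cross_bound x y hij
      calc |Efun x * Mfun x| = |Efun x| * |Mfun x| := abs_mul _ _
      _ ≤ 1 * Mfun x := by
          rw [abs_of_nonneg hMx0]
          exact mul_le_mul_of_nonneg_right (abs_Efun_le_one x) hMx0
      _ = Mfun x := one_mul _
      _ ≤ _ := hMxS
    · by_cases heq : Efun x = Efun y
      · have hEy1 : |Efun y| = 1 := by
          rcases Efun_vals y with h|h|h
          · exact absurd h hEy
          · rw [h]; norm_num
          · rw [h]; norm_num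
        rw [heq, ← mul_sub, abs_mul, hEy1, one_mul]
        rw [abs_le]
        constructor
        · have := Mfun_lip hn y x
          rw [sum_abs_comm y x] at this
          linarith
        · have := Mfun_lip hn x y
          linarith
      · have hne : ∃ p ∈ PP n, Real.sign (x p.2 - x p.1) ≠ Real.sign (y p.2 - y p.1) := by
          by_contra h
          push_neg at h
          exact heq (Finset.prod_congr rfl h)
        obtain ⟨p, hp, hpsign⟩ := hne
        have hx0 : Real.sign (x p.2 - x p.1) ≠ 0 := Efun_ne_zero_factors hEx p hp
        have hy0 : Real.sign (y p.2 - y p.1) ≠ 0 := Efun_ne_zero_factors hEy p hp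
        have hplt := mem_PP.mp hp
        have habs : |x p.2 - x p.1| + |y p.2 - y p.1| ≤ ∑ i, |x i - y i| := by
          have hcb := cross_bound x y hplt
          rcases lt_trichotomy (x p.2 - x p.1) 0 with ha | ha | ha
          · rcases lt_trichotomy (y p.2 - y p.1) 0 with hb | hb | hb
            · exact absurd (by rw [Real.sign_of_neg ha, Real.sign_of_neg hb]) hpsign
            · exact absurd (by rw [hb, Real.sign_zero]) hy0
            · rw [abs_of_neg ha, abs_of_pos hb]
              rw [abs_of_pos (by linarith)] at hcb
              linarith
          · exact absurd (by rw [ha, Real.sign_zero]) hx0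
          · rcases lt_trichotomy (y p.2 - y p.1) 0 with hb | hb | hb
            · rw [abs_of_pos ha, abs_of_neg hb]
              rw [abs_of_neg (by linarith)] at hcb
              linarith
            · exact absurd (by rw [hb, Real.sign_zero]) hy0
            · exact absurd (by rw [Real.sign_of_pos ha, Real.sign_of_pos hb]) hpsign
        have hMM : Mfun x + Mfun y ≤ ∑ i, |x i - y i| := by
          have h1 := Mfun_le x hplt
          have h2 := Mfun_le y hplt
          linarith
        have hQd : |Efun x * Mfun x - Efun y * Mfun y| = Mfun x + Mfun y := by
          rcases Efun_vals x with h|h|h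
          · exact absurd h hEx
          · have hy : Efun y = -1 := by
              rcases Efun_vals y with h'|h'|h'
              · exact absurd h' hEy
              · rw [h, h'] at heq; exact absurd rfl heq
              · exact h'
            rw [h, hy, one_mul, neg_one_mul, sub_neg_eq_add, abs_of_nonneg (by linarith)]
          · have hy : Efun y = 1 := by
              rcases Efun_vals y with h'|h'|h'
              · exact absurd h' hEy
              · exact h'
              · rw [h, h'] at heq; exact absurd rfl heq
            rw [h, hy, one_mul, neg_one_mul]
            rw [show -Mfun x - Mfun y = -(Mfun x + Mfun y) by ring, abs_neg,
              abs_of_nonneg (by linarith)]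
        rw [hQd]
        exact hMM

lemma Qfun_comp {n : ℕ} (hn : 2 ≤ n) (x : Fin n → ℝ) (σ : Equiv.Perm (Fin n)) :
    Qfun (x ∘ σ) = ((Equiv.Perm.sign σ : ℤ) : ℝ) * Qfun x := by
  rw [Qfun_eq, Qfun_eq, Efun_comp_sign, Mfun_comp hn]
  ring

lemma sort_mono {n : ℕ} (x : Fin n → ℝ) : Monotone (sortVec x) := Tuple.monotone_sort x

lemma apply_swap_eq {n : ℕ} {x : Fin n → ℝ} {a b : Fin n} (h : x a = x b) (i : Fin n) :
    x (Equiv.swap a b i) = x i := by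
  rcases eq_or_ne i a with rfl | hia
  · rw [Equiv.swap_apply_left]; exact h.symm
  · rcases eq_or_ne i b with rfl | hib
    · rw [Equiv.swap_apply_right]; exact h
    · rw [Equiv.swap_apply_of_ne_of_ne hia hib]

lemma dplus_le {n : ℕ} (x y : Fin n → ℝ) {s : Equiv.Perm (Fin n)}
    (hs : Equiv.Perm.sign s = 1) : dplus x y ≤ ∑ i, |x i - y (s i)| := by
  have := Finset.inf'_le
    (fun σ : alternatingGroup (Fin n) => ∑ i, |x i - y ((σ : Equiv.Perm (Fin n)) i)|)
    (Finset.mem_univ (⟨s, Equiv.Perm.mem_alternatingGroup.mpr hs⟩ : alternatingGroup (Fin n)))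
  exact this

lemma dplus_eq_exists {n : ℕ} (x y : Fin n → ℝ) :
    ∃ s : Equiv.Perm (Fin n), Equiv.Perm.sign s = 1 ∧
      dplus x y = ∑ i, |x i - y (s i)| := by
  obtain ⟨σ, _, hσ⟩ := Finset.exists_mem_eq_inf' (Finset.univ_nonempty)
    (fun σ : alternatingGroup (Fin n) => ∑ i, |x i - y ((σ : Equiv.Perm (Fin n)) i)|)
  exact ⟨σ, Equiv.Perm.mem_alternatingGroup.mp σ.2, hσ⟩

lemma cost_ge_sorted {n : ℕ} (x y : Fin n → ℝ) (s : Equiv.Perm (Fin n)) :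
    ∑ i, |sortVec x i - sortVec y i| ≤ ∑ i, |x i - y (s i)| := by
  have h1 : ∑ i, |x i - y (s i)| =
      ∑ k, |sortVec x k - sortVec y (((Tuple.sort y)⁻¹ * s * Tuple.sort x) k)| := by
    rw [← Equiv.sum_comp (Tuple.sort x) (fun i => |x i - y (s i)|)]
    refine Finset.sum_congr rfl fun k _ => ?_
    simp only [sortVec, Function.comp, Equiv.Perm.mul_apply, Equiv.Perm.coe_inv, Equiv.apply_symm_apply]
  rw [h1]
  exact rearrange n _ _ (sort_mono x) (sort_mono y) _

lemma cost_sigma0 {n : ℕ} (x y : Fin n → ℝ) :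
    ∑ i, |x i - y ((Tuple.sort y * (Tuple.sort x)⁻¹) i)| =
      ∑ k, |sortVec x k - sortVec y k| := by
  rw [← Equiv.sum_comp (Tuple.sort x)
    (fun i => |x i - y ((Tuple.sort y * (Tuple.sort x)⁻¹) i)|)]
  refine Finset.sum_congr rfl fun k _ => ?_
  simp only [sortVec, Function.comp, Equiv.Perm.mul_apply, Equiv.Perm.coe_inv, Equiv.symm_apply_apply]

lemma adj_min {n : ℕ} (hn : 2 ≤ n) (x : Fin n → ℝ) :
    ∃ k k' : Fin n, (k:ℕ)+1 = (k':ℕ) ∧ sortVec x k' - sortVec x k ≤ Mfun x := by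
  have hM : Mfun (sortVec x) = Mfun x := Mfun_comp hn x (Tuple.sort x)
  obtain ⟨i, j, hij, hMs⟩ := Mfun_mem hn (sortVec x)
  have hijv := Fin.lt_def.mp hij
  have hjn : (i:ℕ)+1 < n := by have := j.isLt; omega
  refine ⟨i, ⟨(i:ℕ)+1, hjn⟩, rfl, ?_⟩
  have h1 : sortVec x ⟨(i:ℕ)+1, hjn⟩ ≤ sortVec x j :=
    sort_mono x (Fin.le_def.mpr (by simp; omega))
  have h2 : sortVec x i ≤ sortVec x j := sort_mono x hij.le
  have h3 : Mfun x = sortVec x j - sortVec x i := by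
    rw [← hM, hMs, abs_of_nonneg (by linarith)]
  linarith

end Stmt12Aux

open Stmt12Aux in
theorem stmt12 (n : ℕ) (hn : 2 ≤ n) (x y : Fin n → ℝ) :
    dplus x y ≤ (∑ i, |sortVec x i - sortVec y i|) + |Qfun x - Qfun y| ∧
    (∑ i, |sortVec x i - sortVec y i|) + |Qfun x - Qfun y| ≤ 2 * dplus x y := by
  classical
  have habsQ : (0:ℝ) ≤ |Qfun x - Qfun y| := abs_nonneg _
  constructor
  · -- lower bound
    have hcost := cost_sigma0 x y
    rcases Int.units_eq_one_or (Equiv.Perm.sign (Tuple.sort y * (Tuple.sort x)⁻¹)) with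
      hsgn | hsgn
    · have := dplus_le x y hsgn
      rw [hcost] at this
      linarith
    · by_cases hxinj : ∃ a b : Fin n, a ≠ b ∧ x a = x b
      · obtain ⟨a, b, hab, hxab⟩ := hxinj
        have hsgn' : Equiv.Perm.sign (Tuple.sort y * (Tuple.sort x)⁻¹ * Equiv.swap a b) = 1 := by
          rw [Equiv.Perm.sign_mul, Equiv.Perm.sign_swap hab, hsgn]
          rfl
        have hcost' :
            ∑ i, |x i - y ((Tuple.sort y * (Tuple.sort x)⁻¹ * Equiv.swap a b) i)| =
              ∑ k, |sortVec x k - sortVec y k| := by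
          rw [← hcost]
          rw [← Equiv.sum_comp (Equiv.swap a b)
            (fun i => |x i - y ((Tuple.sort y * (Tuple.sort x)⁻¹ * Equiv.swap a b) i)|)]
          refine Finset.sum_congr rfl fun i _ => ?_
          simp only [Equiv.Perm.mul_apply, Equiv.swap_apply_self]
          rw [apply_swap_eq hxab i]
        have := dplus_le x y hsgn'
        rw [hcost'] at this
        linarith
      · by_cases hyinj : ∃ a b : Fin n, a ≠ b ∧ y a = y b
        · obtain ⟨a, b, hab, hyab⟩ := hyinj
          have hsgn' : Equiv.Perm.sign
              (Equiv.swap a b * (Tuple.sort y * (Tuple.sort x)⁻¹)) = 1 := by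
            rw [Equiv.Perm.sign_mul, Equiv.Perm.sign_swap hab, hsgn]
            rfl
          have hcost' :
              ∑ i, |x i - y ((Equiv.swap a b * (Tuple.sort y * (Tuple.sort x)⁻¹)) i)| =
                ∑ k, |sortVec x k - sortVec y k| := by
            rw [← hcost]
            refine Finset.sum_congr rfl fun i _ => ?_
            simp only [Equiv.Perm.mul_apply]
            rw [apply_swap_eq hyab]
          have := dplus_le x y hsgn'
          rw [hcost'] at this
          linarith
        · -- both injective
          push_neg at hxinj hyinj
          have hxI : Function.Injective x := fun a b h => by
            by_contra hne; exact hxinj a b hne h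
          have hyI : Function.Injective y := fun a b h => by
            by_contra hne; exact hyinj a b hne h
          have hExs : Efun (sortVec x) = 1 := by
            have hsm : StrictMono (sortVec x) :=
              (sort_mono x).strictMono_of_injective (hxI.comp (Tuple.sort x).injective)
            unfold Efun
            exact Finset.prod_eq_one fun p hp =>
              Real.sign_of_pos (sub_pos.mpr (hsm (mem_PP.mp hp)))
          have hEys : Efun (sortVec y) = 1 := by
            have hsm : StrictMono (sortVec y) :=
              (sort_mono y).strictMono_of_injective (hyI.comp (Tuple.sort y).injective)
            unfold Efun
            exact Finset.prod_eq_one fun p hp =>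
              Real.sign_of_pos (sub_pos.mpr (hsm (mem_PP.mp hp)))
          have hExJ : ((Equiv.Perm.sign (Tuple.sort x) : ℤ) : ℝ) * Efun x = 1 := by
            rw [← Efun_comp_sign]; exact hExs
          have hEyJ : ((Equiv.Perm.sign (Tuple.sort y) : ℤ) : ℝ) * Efun y = 1 := by
            rw [← Efun_comp_sign]; exact hEys
          have hsgnσ : Equiv.Perm.sign (Tuple.sort y) * Equiv.Perm.sign (Tuple.sort x) = -1 := by
            rw [show Equiv.Perm.sign (Tuple.sort x) = Equiv.Perm.sign (Tuple.sort x)⁻¹ from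
              (Equiv.Perm.sign_inv _).symm, ← Equiv.Perm.sign_mul]
            exact hsgn
          have hx1 : Efun x = ((Equiv.Perm.sign (Tuple.sort x) : ℤ) : ℝ) := by
            rcases Int.units_eq_one_or (Equiv.Perm.sign (Tuple.sort x)) with h | h <;>
              rw [h] at hExJ ⊢ <;> push_cast at hExJ ⊢ <;> linarith
          have hy1 : Efun y = ((Equiv.Perm.sign (Tuple.sort y) : ℤ) : ℝ) := by
            rcases Int.units_eq_one_or (Equiv.Perm.sign (Tuple.sort y)) with h | h <;>
              rw [h] at hEyJ ⊢ <;> push_cast at hEyJ ⊢ <;> linarith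
          have hprod : Efun x * Efun y = -1 := by
            rw [hx1, hy1, ← Int.cast_mul, ← Units.val_mul, mul_comm, hsgnσ]
            norm_num
          have hMx0 := Mfun_nonneg hn x
          have hMy0 := Mfun_nonneg hn y
          have hQd : |Qfun x - Qfun y| = Mfun x + Mfun y := by
            rw [Qfun_eq, Qfun_eq]
            rcases Efun_vals x with h | h | h
            · rw [h] at hprod; norm_num at hprod
            · have hy' : Efun y = -1 := by rw [h, one_mul] at hprod; exact hprod
              rw [h, hy', one_mul, neg_one_mul, sub_neg_eq_add,
                abs_of_nonneg (by linarith)]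
            · have hy' : Efun y = 1 := by
                rw [h] at hprod
                linarith
              rw [h, hy', one_mul, neg_one_mul,
                show -Mfun x - Mfun y = -(Mfun x + Mfun y) by ring, abs_neg,
                abs_of_nonneg (by linarith)]
          have hσπ : ∀ m : Fin n,
              (Tuple.sort y * (Tuple.sort x)⁻¹) (Tuple.sort x m) = Tuple.sort y m := by
            intro m
            simp [Equiv.Perm.mul_apply, Equiv.Perm.coe_inv, Equiv.symm_apply_apply]
          rcases le_total (Mfun x) (Mfun y) with hMle | hMle
          · obtain ⟨k, k', hkk', hgap⟩ := adj_min hn x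
            have hkne : k ≠ k' := Fin.ne_of_val_ne (by omega)
            have hπkne : Tuple.sort x k ≠ Tuple.sort x k' := (Tuple.sort x).injective.ne hkne
            have hsgn' : Equiv.Perm.sign (Tuple.sort y * (Tuple.sort x)⁻¹ *
                Equiv.swap (Tuple.sort x k) (Tuple.sort x k')) = 1 := by
              rw [Equiv.Perm.sign_mul, Equiv.Perm.sign_swap hπkne, hsgn]
              rfl
            have hukk : sortVec x k ≤ sortVec x k' :=
              sort_mono x (Fin.le_def.mpr (by omega))
            have hcost' :
                ∑ i, |x i - y ((Tuple.sort y * (Tuple.sort x)⁻¹ *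
                    Equiv.swap (Tuple.sort x k) (Tuple.sort x k')) i)| ≤
                  (∑ i, |x i - y ((Tuple.sort y * (Tuple.sort x)⁻¹) i)|) + 2 * Mfun x := by
              refine sum_two_diff _ _ (Tuple.sort x k) (Tuple.sort x k') hπkne _
                (fun i hia hib => by
                  simp only [Equiv.Perm.mul_apply]
                  rw [Equiv.swap_apply_of_ne_of_ne hia hib]) ?_
              simp only [Equiv.Perm.mul_apply, Equiv.swap_apply_left, Equiv.swap_apply_right,
                Equiv.Perm.coe_inv, Equiv.symm_apply_apply]
              have e1 : |x (Tuple.sort x k) - y (Tuple.sort y k')| ≤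
                  |x (Tuple.sort x k) - x (Tuple.sort x k')| +
                    |x (Tuple.sort x k') - y (Tuple.sort y k')| := abs_sub_le _ _ _
              have e2 : |x (Tuple.sort x k') - y (Tuple.sort y k)| ≤
                  |x (Tuple.sort x k') - x (Tuple.sort x k)| +
                    |x (Tuple.sort x k) - y (Tuple.sort y k)| := abs_sub_le _ _ _
              have egap : |x (Tuple.sort x k) - x (Tuple.sort x k')| =
                  sortVec x k' - sortVec x k := by
                rw [abs_sub_comm]
                exact abs_of_nonneg (sub_nonneg.mpr hukk)
              have egap2 : |x (Tuple.sort x k') - x (Tuple.sort x k)| =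
                  sortVec x k' - sortVec x k :=
                abs_of_nonneg (sub_nonneg.mpr hukk)
              linarith
            rw [hcost] at hcost'
            have hd := dplus_le x y hsgn'
            rw [hQd]
            linarith
          · obtain ⟨k, k', hkk', hgap⟩ := adj_min hn y
            have hkne : k ≠ k' := Fin.ne_of_val_ne (by omega)
            have hρkne : Tuple.sort y k ≠ Tuple.sort y k' := (Tuple.sort y).injective.ne hkne
            have hsgn' : Equiv.Perm.sign (Equiv.swap (Tuple.sort y k) (Tuple.sort y k') *
                (Tuple.sort y * (Tuple.sort x)⁻¹)) = 1 := by
              rw [Equiv.Perm.sign_mul, Equiv.Perm.sign_swap hρkne, hsgn]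
              rfl
            have hwkk : sortVec y k ≤ sortVec y k' :=
              sort_mono y (Fin.le_def.mpr (by omega))
            have hcost' :
                ∑ i, |x i - y ((Equiv.swap (Tuple.sort y k) (Tuple.sort y k') *
                    (Tuple.sort y * (Tuple.sort x)⁻¹)) i)| ≤
                  (∑ i, |x i - y ((Tuple.sort y * (Tuple.sort x)⁻¹) i)|) + 2 * Mfun y := by
              refine sum_two_diff _ _ (Tuple.sort x k) (Tuple.sort x k') 
                ((Tuple.sort x).injective.ne hkne) _
                (fun i hia hib => by
                  simp only [Equiv.Perm.mul_apply]
                  have h1 : (Tuple.sort y) ((Tuple.sort x)⁻¹ i) ≠ Tuple.sort y k := by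
                    intro h
                    apply hia
                    have := (Tuple.sort y).injective h
                    rw [← this, Equiv.Perm.coe_inv, Equiv.apply_symm_apply]
                  have h2 : (Tuple.sort y) ((Tuple.sort x)⁻¹ i) ≠ Tuple.sort y k' := by
                    intro h
                    apply hib
                    have := (Tuple.sort y).injective h
                    rw [← this, Equiv.Perm.coe_inv, Equiv.apply_symm_apply]
                  rw [Equiv.swap_apply_of_ne_of_ne h1 h2]) ?_
              simp only [Equiv.Perm.mul_apply, Equiv.Perm.coe_inv, Equiv.symm_apply_apply,
                Equiv.swap_apply_left, Equiv.swap_apply_right]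
              have e1 : |x (Tuple.sort x k) - y (Tuple.sort y k')| ≤
                  |x (Tuple.sort x k) - y (Tuple.sort y k)| +
                    |y (Tuple.sort y k) - y (Tuple.sort y k')| := abs_sub_le _ _ _
              have e2 : |x (Tuple.sort x k') - y (Tuple.sort y k)| ≤
                  |x (Tuple.sort x k') - y (Tuple.sort y k')| +
                    |y (Tuple.sort y k') - y (Tuple.sort y k)| := abs_sub_le _ _ _
              have egap : |y (Tuple.sort y k) - y (Tuple.sort y k')| =
                  sortVec y k' - sortVec y k := by
                rw [abs_sub_comm]
                exact abs_of_nonneg (sub_nonneg.mpr hwkk)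
              have egap2 : |y (Tuple.sort y k') - y (Tuple.sort y k)| =
                  sortVec y k' - sortVec y k :=
                abs_of_nonneg (sub_nonneg.mpr hwkk)
              linarith
            rw [hcost] at hcost'
            have hd := dplus_le x y hsgn'
            rw [hQd]
            linarith
  · -- upper bound
    obtain ⟨s, hs, hds⟩ := dplus_eq_exists x y
    have h1 := cost_ge_sorted x y s
    have h2 : |Qfun x - Qfun y| ≤ ∑ i, |x i - y (s i)| := by
      have hQy : Qfun (y ∘ s) = Qfun y := by
        rw [Qfun_comp hn y s, hs]
        norm_num
      calc |Qfun x - Qfun y| = |Qfun x - Qfun (y ∘ s)| := by rw [hQy]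
      _ ≤ ∑ i, |x i - (y ∘ s) i| := Qfun_lip hn x (y ∘ s)
      _ = ∑ i, |x i - y (s i)| := rfl
    rw [hds]
    linarith
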